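/- For every μ ∈ (0,1) and positive integer k, the quantity G_μ(k) = k/(1+k^2) - √(k·tanh(√μ k)/√μ)/(1 + k·tanh(√μ k)/√μ) satisfies |G_μ(k)| ≤ C · μ^{1/4} / k^{1/2} for some constant C independent of μ and k. -/

import Mathlib

set_option maxHeartbeats 1000000

lemma sinh_le_mul_cosh {x : ℝ} (hx : 0 ≤ x) : Real.sinh x ≤ x * Real.cosh x := by
  have hderiv : ∀ t : ℝ, HasDerivAt (fun t => t * Real.cosh t - Real.sinh t)
      (t * Real.sinh t) t := by
    intro t
    have h := ((hasDerivAt_id t).mul (Real.hasDerivAt_cosh t)).sub (Real.hasDerivAt_sinh t)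
    refine h.congr_deriv ?_
    simp only [id_eq, Nat.cast_ofNat]
    ring
  have mono : MonotoneOn (fun t => t * Real.cosh t - Real.sinh t) (Set.Ici 0) := by
    apply monotoneOn_of_deriv_nonneg (convex_Ici 0)
    · exact (Continuous.sub (continuous_id.mul Real.continuous_cosh) Real.continuous_sinh).continuousOn
    · intro t ht
      exact (hderiv t).differentiableAt.differentiableWithinAt
    · intro t ht
      rw [(hderiv t).deriv]
      rw [interior_Ici] at ht
      exact mul_nonneg (le_of_lt ht) (Real.sinh_nonneg_iff.2 (le_of_lt ht))
  have := mono (Set.self_mem_Ici) hx hx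
  simpa using this

lemma mul_cosh_le_sinh {x : ℝ} (hx : 0 ≤ x) : (x - x ^ 3) * Real.cosh x ≤ Real.sinh x := by
  have hderiv : ∀ t : ℝ, HasDerivAt (fun t => Real.sinh t - (t - t ^ 3) * Real.cosh t)
      (3 * t ^ 2 * Real.cosh t - (t - t ^ 3) * Real.sinh t) t := by
    intro t
    have h := (Real.hasDerivAt_sinh t).sub
      ((((hasDerivAt_id t).sub ((hasDerivAt_pow 3 t))).mul (Real.hasDerivAt_cosh t)))
    refine h.congr_deriv ?_
    simp only [id_eq, Nat.cast_ofNat, Pi.sub_apply]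
    ring
  have mono : MonotoneOn (fun t => Real.sinh t - (t - t ^ 3) * Real.cosh t) (Set.Ici 0) := by
    apply monotoneOn_of_deriv_nonneg (convex_Ici 0)
    · fun_prop
    · intro t ht
      exact (hderiv t).differentiableAt.differentiableWithinAt
    · intro t ht
      rw [(hderiv t).deriv]
      rw [interior_Ici] at ht
      have ht0 : (0:ℝ) ≤ t := le_of_lt ht
      have hs := Real.sinh_nonneg_iff.2 ht0
      have hc := Real.cosh_pos t
      have hsc := sinh_le_mul_cosh ht0
      rcases le_or_gt t 1 with h1 | h1
      · nlinarith [mul_nonneg (mul_nonneg ht0 (sub_nonneg.2 h1)) hs,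
          mul_nonneg (mul_nonneg ht0 (sub_nonneg.2 h1)) (sub_nonneg.2 hsc)]
      · nlinarith [mul_nonneg (mul_nonneg ht0 (sub_nonneg.2 h1.le)) hs]
  have := mono (Set.self_mem_Ici) hx hx
  simpa using this

lemma tanh_le_self {x : ℝ} (hx : 0 ≤ x) : Real.tanh x ≤ x := by
  rw [Real.tanh_eq_sinh_div_cosh, div_le_iff₀ (Real.cosh_pos x)]
  exact sinh_le_mul_cosh hx

lemma self_sub_cube_le_tanh {x : ℝ} (hx : 0 ≤ x) : x - x ^ 3 ≤ Real.tanh x := by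
  rw [Real.tanh_eq_sinh_div_cosh, le_div_iff₀ (Real.cosh_pos x)]
  exact mul_cosh_le_sinh hx

lemma tanh_mono {x y : ℝ} (hxy : x ≤ y) : Real.tanh x ≤ Real.tanh y := by
  rw [Real.tanh_eq_sinh_div_cosh, Real.tanh_eq_sinh_div_cosh,
    div_le_div_iff₀ (Real.cosh_pos x) (Real.cosh_pos y)]
  have := Real.sinh_nonneg_iff.2 (sub_nonneg.2 hxy)
  rw [Real.sinh_sub] at this
  linarith

lemma aux_one_le_two_mul {a : ℝ} (h0 : 0 ≤ a) (h2 : 1/2 ≤ a^2) : 1 ≤ 2*a := by nlinarith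

lemma aux_le_of_sq_le_sq {a c : ℝ} (ha : 0 ≤ a) (hc : 0 ≤ c) (h : a^2 ≤ c^2) : a ≤ c := by
  nlinarith

/-- There is C > 0, independent of μ ∈ (0,1) and k ≥ 1, with
|G_μ(k)| ≤ C μ^{1/4}/k^{1/2}. -/
theorem abs_G_mu_le_mu_quarter :
    ∃ C : ℝ, 0 < C ∧ ∀ (μ : ℝ), 0 < μ → μ < 1 → ∀ (k : ℕ), 1 ≤ k →
      |(k : ℝ) / (1 + (k : ℝ) ^ 2)
        - Real.sqrt ((k : ℝ) * Real.tanh (Real.sqrt μ * k) / Real.sqrt μ)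
            / (1 + (k : ℝ) * Real.tanh (Real.sqrt μ * k) / Real.sqrt μ)|
        ≤ C * μ ^ (1 / 4 : ℝ) / Real.sqrt k := by
  refine ⟨4, by norm_num, ?_⟩
  intro μ hμ0 hμ1 k hk
  set s := Real.sqrt μ with hs_def
  have hs0 : 0 < s := Real.sqrt_pos.2 hμ0
  have hsμ : s ^ 2 = μ := Real.sq_sqrt hμ0.le
  have hk0 : (0:ℝ) < (k:ℝ) := by exact_mod_cast Nat.pos_of_ne_zero (by omega)
  have hk1 : (1:ℝ) ≤ (k:ℝ) := by exact_mod_cast hk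
  set x := s * (k:ℝ) with hx_def
  have hx0 : 0 < x := mul_pos hs0 hk0
  set T := Real.tanh x with hT_def
  have hTx : T ≤ x := tanh_le_self hx0.le
  have hT3 : x - x ^ 3 ≤ T := self_sub_cube_le_tanh hx0.le
  have hT0 : 0 < T := by
    rw [hT_def, Real.tanh_eq_sinh_div_cosh]
    exact div_pos (Real.sinh_pos_iff.2 hx0) (Real.cosh_pos x)
  set A := (k:ℝ) * T / s with hA_def
  have hA0 : 0 < A := div_pos (mul_pos hk0 hT0) hs0
  have hAk : A ≤ (k:ℝ)^2 := by
    rw [hA_def, div_le_iff₀ hs0]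
    nlinarith [mul_le_mul_of_nonneg_left hTx hk0.le]
  set b := Real.sqrt A with hb_def
  have hb0 : 0 < b := Real.sqrt_pos.2 hA0
  have hb2 : b^2 = A := Real.sq_sqrt hA0.le
  have hbk : b ≤ (k:ℝ) := by
    rw [hb_def]
    calc Real.sqrt A ≤ Real.sqrt ((k:ℝ)^2) := Real.sqrt_le_sqrt hAk
      _ = (k:ℝ) := Real.sqrt_sq hk0.le
  set u := Real.sqrt s with hu_def
  have hu0 : 0 < u := Real.sqrt_pos.2 hs0
  have hu2 : u^2 = s := Real.sq_sqrt hs0.le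
  set v := Real.sqrt (k:ℝ) with hv_def
  have hv0 : 0 < v := Real.sqrt_pos.2 hk0
  have hv2 : v^2 = (k:ℝ) := Real.sq_sqrt hk0.le
  have hu4 : u ^ 4 = μ := by nlinarith [hu2, hsμ]
  have hq : μ ^ (1/4 : ℝ) = u := by
    rw [← hu4, ← Real.rpow_natCast u 4, ← Real.rpow_mul hu0.le]
    norm_num
  rw [hq]
  have hden1 : (0:ℝ) < 1 + (k:ℝ)^2 := by positivity
  have hden2 : (0:ℝ) < 1 + A := by positivity
  have hid : (k:ℝ)/(1+(k:ℝ)^2) - b/(1+A)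
      = (((k:ℝ) - b)*(1 - (k:ℝ)*b))/((1+(k:ℝ)^2)*(1+A)) := by
    rw [← hb2]
    have h1 : (1 + (k:ℝ)^2) ≠ 0 := by positivity
    have h2 : (1 + b^2) ≠ 0 := by positivity
    field_simp
    ring
  clear_value s x T A b u v
  rcases le_or_gt x (1/2) with hhalf | hhalf
  · -- small x case
    have hsk : s * (k:ℝ) ≤ 1/2 := by rw [← hx_def]; exact hhalf
    have hx2 : x^2 ≤ 1/4 := by nlinarith
    have hTlow : (3/4)*x ≤ T := by
      nlinarith [hT3, mul_le_mul_of_nonneg_left hx2 hx0.le]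
    have hAlow : (3/4)*(k:ℝ)^2 ≤ A := by
      rw [hA_def, le_div_iff₀ hs0]
      nlinarith [mul_le_mul_of_nonneg_left hTlow hk0.le]
    have hkb : ((k:ℝ) - b) ≤ ((k:ℝ)^2 - A)/(k:ℝ) := by
      rw [le_div_iff₀ hk0]
      nlinarith [mul_nonneg (sub_nonneg.2 hbk) hb0.le, hb2]
    have hx3 : x^3 = μ * s * (k:ℝ)^3 := by rw [hx_def, ← hsμ]; ring
    have hKA : (k:ℝ)^2 - A ≤ μ * (k:ℝ)^4 := by
      have h1 : (k:ℝ)*(x - x^3) ≤ (k:ℝ)*T := mul_le_mul_of_nonneg_left hT3 hk0.le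
      have h2 : ((k:ℝ)^2 - μ*(k:ℝ)^4) * s ≤ (k:ℝ)*T := by
        calc ((k:ℝ)^2 - μ*(k:ℝ)^4) * s = (k:ℝ)*(x - x^3) := by rw [hx3, hx_def]; ring
          _ ≤ (k:ℝ)*T := h1
      have h3 : (k:ℝ)^2 - μ*(k:ℝ)^4 ≤ (k:ℝ)*T/s := (le_div_iff₀ hs0).2 h2
      rw [hA_def]; linarith
    have habs : |(k:ℝ)/(1+(k:ℝ)^2) - b/(1+A)| ≤ ((k:ℝ) - b)/(1+A) := by
      rw [hid, abs_div, abs_of_pos (mul_pos hden1 hden2)]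
      have h1 : |1 - (k:ℝ)*b| ≤ 1 + (k:ℝ)^2 := by
        rw [abs_le]
        constructor <;> nlinarith [mul_nonneg hk0.le hb0.le,
          mul_le_mul_of_nonneg_left hbk hk0.le]
      have h2 : |((k:ℝ) - b)*(1 - (k:ℝ)*b)| ≤ ((k:ℝ) - b)*(1 + (k:ℝ)^2) := by
        rw [abs_mul, abs_of_nonneg (sub_nonneg.2 hbk)]
        exact mul_le_mul_of_nonneg_left h1 (sub_nonneg.2 hbk)
      calc |((k:ℝ) - b)*(1 - (k:ℝ)*b)| / ((1+(k:ℝ)^2)*(1+A))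
          ≤ (((k:ℝ) - b)*(1 + (k:ℝ)^2)) / ((1+(k:ℝ)^2)*(1+A)) := by gcongr
        _ = ((k:ℝ) - b)/(1+A) := by
            rw [mul_comm ((k:ℝ) - b) _, mul_div_mul_left _ _ (ne_of_gt hden1)]
    have hmain : ((k:ℝ) - b)/(1+A) ≤ (4/3) * (μ * (k:ℝ)) := by
      have hden : (3/4)*(k:ℝ)^2 ≤ 1 + A := by linarith
      have hnum : (0:ℝ) ≤ ((k:ℝ)^2 - A)/(k:ℝ) := by
        apply div_nonneg _ hk0.le; linarith
      calc ((k:ℝ) - b)/(1+A) ≤ (((k:ℝ)^2 - A)/(k:ℝ))/((3/4)*(k:ℝ)^2) :=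
            div_le_div₀ hnum hkb (by positivity) hden
        _ ≤ (μ*(k:ℝ)^4/(k:ℝ))/((3/4)*(k:ℝ)^2) := by gcongr
        _ = (4/3) * (μ * (k:ℝ)) := by field_simp
    have huv : u*v ≤ 1 := by nlinarith [mul_pos hu0 hv0]
    have hfin : (4/3) * (μ * (k:ℝ)) ≤ 4*u/v := by
      rw [le_div_iff₀ hv0]
      have e1 : μ*(k:ℝ)*v = u*((u*v)*(s*(k:ℝ))) := by
        rw [← hsμ, ← hu2, ← hv2]; ring
      have e2 : (u*v)*(s*(k:ℝ)) ≤ 1*(1/2) :=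
        mul_le_mul huv hsk (by positivity) (by norm_num)
      have e3 : μ*(k:ℝ)*v ≤ u*(1*(1/2)) := by
        rw [e1]; exact mul_le_mul_of_nonneg_left e2 hu0.le
      linarith [e3, hu0.le]
    calc |(k:ℝ)/(1+(k:ℝ)^2) - b/(1+A)| ≤ ((k:ℝ) - b)/(1+A) := habs
      _ ≤ (4/3) * (μ * (k:ℝ)) := hmain
      _ ≤ 4*u/v := hfin
  · -- large x case
    have hsk : 1/2 ≤ s * (k:ℝ) := by rw [← hx_def]; exact hhalf.le
    have hT38 : 3/8 ≤ T := by
      have h1 : Real.tanh (1/2) ≤ T := by rw [hT_def]; exact tanh_mono hhalf.le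
      have h2 : (1/2:ℝ) - (1/2)^3 ≤ Real.tanh (1/2) := self_sub_cube_le_tanh (by norm_num)
      norm_num at h2; linarith
    have hfk : (k:ℝ)/(1+(k:ℝ)^2) ≤ 1/(k:ℝ) := by
      rw [div_le_div_iff₀ hden1 hk0]; nlinarith
    have hfb : b/(1+A) ≤ 1/b := by
      rw [div_le_div_iff₀ hden2 hb0]
      have e : b*b = A := by rw [← hb2]; ring
      linarith [e]
    have habs2 : |(k:ℝ)/(1+(k:ℝ)^2) - b/(1+A)| ≤ 1/(k:ℝ) + 1/b := by
      have p1 : (0:ℝ) ≤ (k:ℝ)/(1+(k:ℝ)^2) := by positivity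
      have p2 : (0:ℝ) ≤ b/(1+A) := by positivity
      rw [abs_le]
      constructor <;> [linarith; linarith]
    have h1k : 1/(k:ℝ) ≤ 2*u/v := by
      rw [div_le_div_iff₀ hk0 hv0]
      have esk : (u*v)^2 = s*(k:ℝ) := by rw [← hu2, ← hv2]; ring
      have huv : 1 ≤ 2*(u*v) := by
        apply aux_one_le_two_mul (mul_nonneg hu0.le hv0.le)
        rw [esk]; exact hsk
      have h := mul_le_mul_of_nonneg_left huv hv0.le
      have e : v*(2*(u*v)) = 2*u*(k:ℝ) := by rw [← hv2]; ring
      linarith [h, e]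
    have h1b : 1/b ≤ 2*u/v := by
      rw [div_le_div_iff₀ hb0 hv0]
      have hsA : s * A = (k:ℝ) * T := by rw [hA_def]; field_simp
      have key : v^2 ≤ (2*u*b)^2 := by
        have e : (2*u*b)^2 = 4*(s*A) := by rw [← hu2, ← hb2]; ring
        rw [hv2, e, hsA]
        have h := mul_le_mul_of_nonneg_left hT38 hk0.le
        linarith [h, hk0.le]
      rw [one_mul]
      exact aux_le_of_sq_le_sq hv0.le (by positivity) key
    calc |(k:ℝ)/(1+(k:ℝ)^2) - b/(1+A)| ≤ 1/(k:ℝ) + 1/b := habs2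
      _ ≤ 2*u/v + 2*u/v := add_le_add h1k h1b
      _ = 4*u/v := by ring
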